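/- Let M = 𝒥₅ ⊕ 𝒥₃ ⊕ 0₁ ∈ M(9,ℝ). Then the 10-dimensional almost abelian Lie algebra 𝔤_M = ℝe₀ ⋉_M ℝ^9 does not admit any symplectic structure. -/

import Mathlib

open Matrix Module

noncomputable section

/-- The `n × n` real nilpotent Jordan block `𝒥ₙ`, with `1`s on the subdiagonal
and `0`s elsewhere. -/
def jordanBlock (n : ℕ) : Matrix (Fin n) (Fin n) ℝ :=
  Matrix.of fun i j => if (i : ℕ) = (j : ℕ) + 1 then 1 else 0

/-- Two square real matrices with the same index type are conjugate:
`B = P * A * P⁻¹` for some invertible `P`. -/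
def MatConj {ι : Type*} [Fintype ι] [DecidableEq ι] (A B : Matrix ι ι ℝ) : Prop :=
  ∃ P : Matrix ι ι ℝ, IsUnit P ∧ B = P * A * P⁻¹

/-- Conjugacy of square real matrices indexed by possibly different (equipotent)
index types: after relabelling the rows/columns of `A` by a bijection, the two
matrices are conjugate. -/
def MatConj' {ι κ : Type*} [Fintype ι] [DecidableEq ι] [Fintype κ] [DecidableEq κ]
    (A : Matrix ι ι ℝ) (B : Matrix κ κ ℝ) : Prop :=
  ∃ e : ι ≃ κ, MatConj (Matrix.reindex e e A) B

/-- The Lie bracket of the almost abelian Lie algebra `𝔤_A = ℝe₀ ⋉_A ℝ^ι`, on the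
underlying vector space `ℝ × (ι → ℝ)`:  `[(t,v),(s,w)] = (0, t • A w − s • A v)`. -/
def aaBracket {ι : Type*} [Fintype ι] (A : Matrix ι ι ℝ) :
    ℝ × (ι → ℝ) → ℝ × (ι → ℝ) → ℝ × (ι → ℝ) :=
  fun x y => (0, x.1 • A.mulVec y.2 - y.1 • A.mulVec x.2)

/-- The almost abelian Lie algebra `𝔤_A` admits a complex structure: a linear
endomorphism `j` with `j² = -id` whose Nijenhuis tensor vanishes. -/
def HasComplexStructure {ι : Type*} [Fintype ι] (A : Matrix ι ι ℝ) : Prop :=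
  ∃ j : (ℝ × (ι → ℝ)) →ₗ[ℝ] ℝ × (ι → ℝ),
    (∀ x, j (j x) = -x) ∧
    (∀ x y, aaBracket A x y + j (aaBracket A (j x) y + aaBracket A x (j y))
        - aaBracket A (j x) (j y) = 0)

/-- The almost abelian Lie algebra `𝔤_A` admits a symplectic structure: a
non-degenerate alternating bilinear form which is closed. -/
def HasSymplecticStructure {ι : Type*} [Fintype ι] (A : Matrix ι ι ℝ) : Prop :=
  ∃ ω : (ℝ × (ι → ℝ)) →ₗ[ℝ] (ℝ × (ι → ℝ)) →ₗ[ℝ] ℝ,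
    (∀ x, ω x x = 0) ∧
    (∀ x, (∀ y, ω x y = 0) → x = 0) ∧
    (∀ x y z, ω (aaBracket A x y) z + ω (aaBracket A y z) x + ω (aaBracket A z x) y = 0)


def M9 : Matrix (Fin 5 ⊕ (Fin 3 ⊕ Fin 1)) (Fin 5 ⊕ (Fin 3 ⊕ Fin 1)) ℝ :=
  Matrix.fromBlocks (jordanBlock 5) 0 0
    (Matrix.fromBlocks (jordanBlock 3) 0 0 (0 : Matrix (Fin 1) (Fin 1) ℝ))

set_option maxHeartbeats 2000000 in
theorem key14 : ¬ HasSymplecticStructure M9 := by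
  rintro ⟨ω, halt, hnd, hcl⟩
  have hskew : ∀ x y, ω x y = - ω y x := by
    intro x y
    have h := halt (x + y)
    simp only [map_add, LinearMap.add_apply, halt x, halt y, zero_add, add_zero] at h
    linarith
  have hR : ∀ i j : Fin 5 ⊕ (Fin 3 ⊕ Fin 1),
      ω ((0:ℝ), M9 *ᵥ Pi.single i (1:ℝ)) ((0:ℝ), Pi.single j (1:ℝ))
        = ω ((0:ℝ), M9 *ᵥ Pi.single j (1:ℝ)) ((0:ℝ), Pi.single i (1:ℝ)) := by
    intro i j
    have h := hcl (((1:ℝ), (0 : Fin 5 ⊕ (Fin 3 ⊕ Fin 1) → ℝ)) : ℝ × (Fin 5 ⊕ (Fin 3 ⊕ Fin 1) → ℝ)) ((0:ℝ), Pi.single i (1:ℝ)) ((0:ℝ), Pi.single j (1:ℝ))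
    have e1 : aaBracket M9 (((1:ℝ), (0 : Fin 5 ⊕ (Fin 3 ⊕ Fin 1) → ℝ)) : ℝ × (Fin 5 ⊕ (Fin 3 ⊕ Fin 1) → ℝ)) ((0:ℝ), Pi.single i (1:ℝ))
        = ((0:ℝ), M9 *ᵥ Pi.single i (1:ℝ)) := by
      simp [aaBracket]
    have e2 : aaBracket M9 ((0:ℝ), Pi.single i (1:ℝ)) ((0:ℝ), Pi.single j (1:ℝ))
        = (0 : ℝ × (Fin 5 ⊕ (Fin 3 ⊕ Fin 1) → ℝ)) := by
      simp [aaBracket, Prod.ext_iff]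
    have e3 : aaBracket M9 ((0:ℝ), Pi.single j (1:ℝ)) (((1:ℝ), (0 : Fin 5 ⊕ (Fin 3 ⊕ Fin 1) → ℝ)) : ℝ × (Fin 5 ⊕ (Fin 3 ⊕ Fin 1) → ℝ))
        = - ((0:ℝ), M9 *ᵥ Pi.single j (1:ℝ)) := by
      simp [aaBracket, Prod.ext_iff]
    rw [e1, e2, e3, map_zero, map_neg] at h
    simp only [LinearMap.zero_apply, LinearMap.neg_apply, add_zero] at h
    linarith
  have hm0 : M9 *ᵥ Pi.single (Sum.inl 0 : Fin 5 ⊕ (Fin 3 ⊕ Fin 1)) (1:ℝ) = Pi.single (Sum.inl 1 : Fin 5 ⊕ (Fin 3 ⊕ Fin 1)) (1:ℝ) := by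
    funext i
    rcases i with a | b | c
    · fin_cases a <;> simp [M9, jordanBlock, Pi.single_apply] <;> decide
    · fin_cases b <;> simp [M9, jordanBlock, Pi.single_apply] <;> decide
    · fin_cases c <;> simp [M9, jordanBlock, Pi.single_apply] <;> decide
  have hm1 : M9 *ᵥ Pi.single (Sum.inl 1 : Fin 5 ⊕ (Fin 3 ⊕ Fin 1)) (1:ℝ) = Pi.single (Sum.inl 2 : Fin 5 ⊕ (Fin 3 ⊕ Fin 1)) (1:ℝ) := by
    funext i
    rcases i with a | b | c
    · fin_cases a <;> simp [M9, jordanBlock, Pi.single_apply] <;> decide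
    · fin_cases b <;> simp [M9, jordanBlock, Pi.single_apply] <;> decide
    · fin_cases c <;> simp [M9, jordanBlock, Pi.single_apply] <;> decide
  have hm2 : M9 *ᵥ Pi.single (Sum.inl 2 : Fin 5 ⊕ (Fin 3 ⊕ Fin 1)) (1:ℝ) = Pi.single (Sum.inl 3 : Fin 5 ⊕ (Fin 3 ⊕ Fin 1)) (1:ℝ) := by
    funext i
    rcases i with a | b | c
    · fin_cases a <;> simp [M9, jordanBlock, Pi.single_apply] <;> decide
    · fin_cases b <;> simp [M9, jordanBlock, Pi.single_apply] <;> decide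
    · fin_cases c <;> simp [M9, jordanBlock, Pi.single_apply] <;> decide
  have hm3 : M9 *ᵥ Pi.single (Sum.inl 3 : Fin 5 ⊕ (Fin 3 ⊕ Fin 1)) (1:ℝ) = Pi.single (Sum.inl 4 : Fin 5 ⊕ (Fin 3 ⊕ Fin 1)) (1:ℝ) := by
    funext i
    rcases i with a | b | c
    · fin_cases a <;> simp [M9, jordanBlock, Pi.single_apply] <;> decide
    · fin_cases b <;> simp [M9, jordanBlock, Pi.single_apply] <;> decide
    · fin_cases c <;> simp [M9, jordanBlock, Pi.single_apply] <;> decide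
  have hm4 : M9 *ᵥ Pi.single (Sum.inl 4 : Fin 5 ⊕ (Fin 3 ⊕ Fin 1)) (1:ℝ) = (0 : Fin 5 ⊕ (Fin 3 ⊕ Fin 1) → ℝ) := by
    funext i
    rcases i with a | b | c
    · fin_cases a <;> simp [M9, jordanBlock, Pi.single_apply] <;> decide
    · fin_cases b <;> simp [M9, jordanBlock, Pi.single_apply] <;> decide
    · fin_cases c <;> simp [M9, jordanBlock, Pi.single_apply] <;> decide
  have hm5 : M9 *ᵥ Pi.single (Sum.inr (Sum.inl 0) : Fin 5 ⊕ (Fin 3 ⊕ Fin 1)) (1:ℝ) = Pi.single (Sum.inr (Sum.inl 1) : Fin 5 ⊕ (Fin 3 ⊕ Fin 1)) (1:ℝ) := by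
    funext i
    rcases i with a | b | c
    · fin_cases a <;> simp [M9, jordanBlock, Pi.single_apply] <;> decide
    · fin_cases b <;> simp [M9, jordanBlock, Pi.single_apply] <;> decide
    · fin_cases c <;> simp [M9, jordanBlock, Pi.single_apply] <;> decide
  have hm6 : M9 *ᵥ Pi.single (Sum.inr (Sum.inl 1) : Fin 5 ⊕ (Fin 3 ⊕ Fin 1)) (1:ℝ) = Pi.single (Sum.inr (Sum.inl 2) : Fin 5 ⊕ (Fin 3 ⊕ Fin 1)) (1:ℝ) := by
    funext i
    rcases i with a | b | c
    · fin_cases a <;> simp [M9, jordanBlock, Pi.single_apply] <;> decide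
    · fin_cases b <;> simp [M9, jordanBlock, Pi.single_apply] <;> decide
    · fin_cases c <;> simp [M9, jordanBlock, Pi.single_apply] <;> decide
  have hm7 : M9 *ᵥ Pi.single (Sum.inr (Sum.inl 2) : Fin 5 ⊕ (Fin 3 ⊕ Fin 1)) (1:ℝ) = (0 : Fin 5 ⊕ (Fin 3 ⊕ Fin 1) → ℝ) := by
    funext i
    rcases i with a | b | c
    · fin_cases a <;> simp [M9, jordanBlock, Pi.single_apply] <;> decide
    · fin_cases b <;> simp [M9, jordanBlock, Pi.single_apply] <;> decide
    · fin_cases c <;> simp [M9, jordanBlock, Pi.single_apply] <;> decide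
  have hm8 : M9 *ᵥ Pi.single (Sum.inr (Sum.inr 0) : Fin 5 ⊕ (Fin 3 ⊕ Fin 1)) (1:ℝ) = (0 : Fin 5 ⊕ (Fin 3 ⊕ Fin 1) → ℝ) := by
    funext i
    rcases i with a | b | c
    · fin_cases a <;> simp [M9, jordanBlock, Pi.single_apply] <;> decide
    · fin_cases b <;> simp [M9, jordanBlock, Pi.single_apply] <;> decide
    · fin_cases c <;> simp [M9, jordanBlock, Pi.single_apply] <;> decide
  have z14 : ω ((0:ℝ), Pi.single (Sum.inl 1 : Fin 5 ⊕ (Fin 3 ⊕ Fin 1)) (1:ℝ)) ((0:ℝ), Pi.single (Sum.inl 4 : Fin 5 ⊕ (Fin 3 ⊕ Fin 1)) (1:ℝ)) = 0 := by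
    have h := hR (Sum.inl 0 : Fin 5 ⊕ (Fin 3 ⊕ Fin 1)) (Sum.inl 4 : Fin 5 ⊕ (Fin 3 ⊕ Fin 1))
    rw [hm0, hm4] at h
    simpa [Prod.mk_zero_zero] using h
  have z24 : ω ((0:ℝ), Pi.single (Sum.inl 2 : Fin 5 ⊕ (Fin 3 ⊕ Fin 1)) (1:ℝ)) ((0:ℝ), Pi.single (Sum.inl 4 : Fin 5 ⊕ (Fin 3 ⊕ Fin 1)) (1:ℝ)) = 0 := by
    have h := hR (Sum.inl 1 : Fin 5 ⊕ (Fin 3 ⊕ Fin 1)) (Sum.inl 4 : Fin 5 ⊕ (Fin 3 ⊕ Fin 1))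
    rw [hm1, hm4] at h
    simpa [Prod.mk_zero_zero] using h
  have z34 : ω ((0:ℝ), Pi.single (Sum.inl 3 : Fin 5 ⊕ (Fin 3 ⊕ Fin 1)) (1:ℝ)) ((0:ℝ), Pi.single (Sum.inl 4 : Fin 5 ⊕ (Fin 3 ⊕ Fin 1)) (1:ℝ)) = 0 := by
    have h := hR (Sum.inl 2 : Fin 5 ⊕ (Fin 3 ⊕ Fin 1)) (Sum.inl 4 : Fin 5 ⊕ (Fin 3 ⊕ Fin 1))
    rw [hm2, hm4] at h
    simpa [Prod.mk_zero_zero] using h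
  have z64 : ω ((0:ℝ), Pi.single (Sum.inr (Sum.inl 1) : Fin 5 ⊕ (Fin 3 ⊕ Fin 1)) (1:ℝ)) ((0:ℝ), Pi.single (Sum.inl 4 : Fin 5 ⊕ (Fin 3 ⊕ Fin 1)) (1:ℝ)) = 0 := by
    have h := hR (Sum.inr (Sum.inl 0) : Fin 5 ⊕ (Fin 3 ⊕ Fin 1)) (Sum.inl 4 : Fin 5 ⊕ (Fin 3 ⊕ Fin 1))
    rw [hm5, hm4] at h
    simpa [Prod.mk_zero_zero] using h
  have z74 : ω ((0:ℝ), Pi.single (Sum.inr (Sum.inl 2) : Fin 5 ⊕ (Fin 3 ⊕ Fin 1)) (1:ℝ)) ((0:ℝ), Pi.single (Sum.inl 4 : Fin 5 ⊕ (Fin 3 ⊕ Fin 1)) (1:ℝ)) = 0 := by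
    have h := hR (Sum.inr (Sum.inl 1) : Fin 5 ⊕ (Fin 3 ⊕ Fin 1)) (Sum.inl 4 : Fin 5 ⊕ (Fin 3 ⊕ Fin 1))
    rw [hm6, hm4] at h
    simpa [Prod.mk_zero_zero] using h
  have z47 : ω ((0:ℝ), Pi.single (Sum.inl 4 : Fin 5 ⊕ (Fin 3 ⊕ Fin 1)) (1:ℝ)) ((0:ℝ), Pi.single (Sum.inr (Sum.inl 2) : Fin 5 ⊕ (Fin 3 ⊕ Fin 1)) (1:ℝ)) = 0 := by
    have h := hR (Sum.inl 3 : Fin 5 ⊕ (Fin 3 ⊕ Fin 1)) (Sum.inr (Sum.inl 2) : Fin 5 ⊕ (Fin 3 ⊕ Fin 1))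
    rw [hm3, hm7] at h
    simpa [Prod.mk_zero_zero] using h
  have z48 : ω ((0:ℝ), Pi.single (Sum.inl 4 : Fin 5 ⊕ (Fin 3 ⊕ Fin 1)) (1:ℝ)) ((0:ℝ), Pi.single (Sum.inr (Sum.inr 0) : Fin 5 ⊕ (Fin 3 ⊕ Fin 1)) (1:ℝ)) = 0 := by
    have h := hR (Sum.inl 3 : Fin 5 ⊕ (Fin 3 ⊕ Fin 1)) (Sum.inr (Sum.inr 0) : Fin 5 ⊕ (Fin 3 ⊕ Fin 1))
    rw [hm3, hm8] at h
    simpa [Prod.mk_zero_zero] using h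
  have z17 : ω ((0:ℝ), Pi.single (Sum.inl 1 : Fin 5 ⊕ (Fin 3 ⊕ Fin 1)) (1:ℝ)) ((0:ℝ), Pi.single (Sum.inr (Sum.inl 2) : Fin 5 ⊕ (Fin 3 ⊕ Fin 1)) (1:ℝ)) = 0 := by
    have h := hR (Sum.inl 0 : Fin 5 ⊕ (Fin 3 ⊕ Fin 1)) (Sum.inr (Sum.inl 2) : Fin 5 ⊕ (Fin 3 ⊕ Fin 1))
    rw [hm0, hm7] at h
    simpa [Prod.mk_zero_zero] using h
  have z27 : ω ((0:ℝ), Pi.single (Sum.inl 2 : Fin 5 ⊕ (Fin 3 ⊕ Fin 1)) (1:ℝ)) ((0:ℝ), Pi.single (Sum.inr (Sum.inl 2) : Fin 5 ⊕ (Fin 3 ⊕ Fin 1)) (1:ℝ)) = 0 := by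
    have h := hR (Sum.inl 1 : Fin 5 ⊕ (Fin 3 ⊕ Fin 1)) (Sum.inr (Sum.inl 2) : Fin 5 ⊕ (Fin 3 ⊕ Fin 1))
    rw [hm1, hm7] at h
    simpa [Prod.mk_zero_zero] using h
  have z37 : ω ((0:ℝ), Pi.single (Sum.inl 3 : Fin 5 ⊕ (Fin 3 ⊕ Fin 1)) (1:ℝ)) ((0:ℝ), Pi.single (Sum.inr (Sum.inl 2) : Fin 5 ⊕ (Fin 3 ⊕ Fin 1)) (1:ℝ)) = 0 := by
    have h := hR (Sum.inl 2 : Fin 5 ⊕ (Fin 3 ⊕ Fin 1)) (Sum.inr (Sum.inl 2) : Fin 5 ⊕ (Fin 3 ⊕ Fin 1))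
    rw [hm2, hm7] at h
    simpa [Prod.mk_zero_zero] using h
  have z67 : ω ((0:ℝ), Pi.single (Sum.inr (Sum.inl 1) : Fin 5 ⊕ (Fin 3 ⊕ Fin 1)) (1:ℝ)) ((0:ℝ), Pi.single (Sum.inr (Sum.inl 2) : Fin 5 ⊕ (Fin 3 ⊕ Fin 1)) (1:ℝ)) = 0 := by
    have h := hR (Sum.inr (Sum.inl 0) : Fin 5 ⊕ (Fin 3 ⊕ Fin 1)) (Sum.inr (Sum.inl 2) : Fin 5 ⊕ (Fin 3 ⊕ Fin 1))
    rw [hm5, hm7] at h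
    simpa [Prod.mk_zero_zero] using h
  have z78 : ω ((0:ℝ), Pi.single (Sum.inr (Sum.inl 2) : Fin 5 ⊕ (Fin 3 ⊕ Fin 1)) (1:ℝ)) ((0:ℝ), Pi.single (Sum.inr (Sum.inr 0) : Fin 5 ⊕ (Fin 3 ⊕ Fin 1)) (1:ℝ)) = 0 := by
    have h := hR (Sum.inr (Sum.inl 1) : Fin 5 ⊕ (Fin 3 ⊕ Fin 1)) (Sum.inr (Sum.inr 0) : Fin 5 ⊕ (Fin 3 ⊕ Fin 1))
    rw [hm6, hm8] at h
    simpa [Prod.mk_zero_zero] using h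
  have z38 : ω ((0:ℝ), Pi.single (Sum.inl 3 : Fin 5 ⊕ (Fin 3 ⊕ Fin 1)) (1:ℝ)) ((0:ℝ), Pi.single (Sum.inr (Sum.inr 0) : Fin 5 ⊕ (Fin 3 ⊕ Fin 1)) (1:ℝ)) = 0 := by
    have h := hR (Sum.inl 2 : Fin 5 ⊕ (Fin 3 ⊕ Fin 1)) (Sum.inr (Sum.inr 0) : Fin 5 ⊕ (Fin 3 ⊕ Fin 1))
    rw [hm2, hm8] at h
    simpa [Prod.mk_zero_zero] using h
  have z22 : ω ((0:ℝ), Pi.single (Sum.inl 2 : Fin 5 ⊕ (Fin 3 ⊕ Fin 1)) (1:ℝ)) ((0:ℝ), Pi.single (Sum.inl 2 : Fin 5 ⊕ (Fin 3 ⊕ Fin 1)) (1:ℝ)) = 0 := halt _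
  have z44 : ω ((0:ℝ), Pi.single (Sum.inl 4 : Fin 5 ⊕ (Fin 3 ⊕ Fin 1)) (1:ℝ)) ((0:ℝ), Pi.single (Sum.inl 4 : Fin 5 ⊕ (Fin 3 ⊕ Fin 1)) (1:ℝ)) = 0 := halt _
  have z66 : ω ((0:ℝ), Pi.single (Sum.inr (Sum.inl 1) : Fin 5 ⊕ (Fin 3 ⊕ Fin 1)) (1:ℝ)) ((0:ℝ), Pi.single (Sum.inr (Sum.inl 1) : Fin 5 ⊕ (Fin 3 ⊕ Fin 1)) (1:ℝ)) = 0 := halt _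
  have z77 : ω ((0:ℝ), Pi.single (Sum.inr (Sum.inl 2) : Fin 5 ⊕ (Fin 3 ⊕ Fin 1)) (1:ℝ)) ((0:ℝ), Pi.single (Sum.inr (Sum.inl 2) : Fin 5 ⊕ (Fin 3 ⊕ Fin 1)) (1:ℝ)) = 0 := halt _
  have z33 : ω ((0:ℝ), Pi.single (Sum.inl 3 : Fin 5 ⊕ (Fin 3 ⊕ Fin 1)) (1:ℝ)) ((0:ℝ), Pi.single (Sum.inl 3 : Fin 5 ⊕ (Fin 3 ⊕ Fin 1)) (1:ℝ)) = 0 := halt _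
  have z41 : ω ((0:ℝ), Pi.single (Sum.inl 4 : Fin 5 ⊕ (Fin 3 ⊕ Fin 1)) (1:ℝ)) ((0:ℝ), Pi.single (Sum.inl 1 : Fin 5 ⊕ (Fin 3 ⊕ Fin 1)) (1:ℝ)) = 0 := by
    rw [hskew, z14, neg_zero]
  have z42 : ω ((0:ℝ), Pi.single (Sum.inl 4 : Fin 5 ⊕ (Fin 3 ⊕ Fin 1)) (1:ℝ)) ((0:ℝ), Pi.single (Sum.inl 2 : Fin 5 ⊕ (Fin 3 ⊕ Fin 1)) (1:ℝ)) = 0 := by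
    rw [hskew, z24, neg_zero]
  have z43 : ω ((0:ℝ), Pi.single (Sum.inl 4 : Fin 5 ⊕ (Fin 3 ⊕ Fin 1)) (1:ℝ)) ((0:ℝ), Pi.single (Sum.inl 3 : Fin 5 ⊕ (Fin 3 ⊕ Fin 1)) (1:ℝ)) = 0 := by
    rw [hskew, z34, neg_zero]
  have z46 : ω ((0:ℝ), Pi.single (Sum.inl 4 : Fin 5 ⊕ (Fin 3 ⊕ Fin 1)) (1:ℝ)) ((0:ℝ), Pi.single (Sum.inr (Sum.inl 1) : Fin 5 ⊕ (Fin 3 ⊕ Fin 1)) (1:ℝ)) = 0 := by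
    rw [hskew, z64, neg_zero]
  have z71 : ω ((0:ℝ), Pi.single (Sum.inr (Sum.inl 2) : Fin 5 ⊕ (Fin 3 ⊕ Fin 1)) (1:ℝ)) ((0:ℝ), Pi.single (Sum.inl 1 : Fin 5 ⊕ (Fin 3 ⊕ Fin 1)) (1:ℝ)) = 0 := by
    rw [hskew, z17, neg_zero]
  have z72 : ω ((0:ℝ), Pi.single (Sum.inr (Sum.inl 2) : Fin 5 ⊕ (Fin 3 ⊕ Fin 1)) (1:ℝ)) ((0:ℝ), Pi.single (Sum.inl 2 : Fin 5 ⊕ (Fin 3 ⊕ Fin 1)) (1:ℝ)) = 0 := by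
    rw [hskew, z27, neg_zero]
  have z73 : ω ((0:ℝ), Pi.single (Sum.inr (Sum.inl 2) : Fin 5 ⊕ (Fin 3 ⊕ Fin 1)) (1:ℝ)) ((0:ℝ), Pi.single (Sum.inl 3 : Fin 5 ⊕ (Fin 3 ⊕ Fin 1)) (1:ℝ)) = 0 := by
    rw [hskew, z37, neg_zero]
  have z76 : ω ((0:ℝ), Pi.single (Sum.inr (Sum.inl 2) : Fin 5 ⊕ (Fin 3 ⊕ Fin 1)) (1:ℝ)) ((0:ℝ), Pi.single (Sum.inr (Sum.inl 1) : Fin 5 ⊕ (Fin 3 ⊕ Fin 1)) (1:ℝ)) = 0 := by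
    rw [hskew, z67, neg_zero]
  have z31 : ω ((0:ℝ), Pi.single (Sum.inl 3 : Fin 5 ⊕ (Fin 3 ⊕ Fin 1)) (1:ℝ)) ((0:ℝ), Pi.single (Sum.inl 1 : Fin 5 ⊕ (Fin 3 ⊕ Fin 1)) (1:ℝ)) = 0 := by
    have h := hR (Sum.inl 2 : Fin 5 ⊕ (Fin 3 ⊕ Fin 1)) (Sum.inl 1 : Fin 5 ⊕ (Fin 3 ⊕ Fin 1))
    rw [hm2, hm1] at h
    rw [h, z22]
  have z23 : ω ((0:ℝ), Pi.single (Sum.inl 2 : Fin 5 ⊕ (Fin 3 ⊕ Fin 1)) (1:ℝ)) ((0:ℝ), Pi.single (Sum.inl 3 : Fin 5 ⊕ (Fin 3 ⊕ Fin 1)) (1:ℝ)) = 0 := by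
    have h := hR (Sum.inl 1 : Fin 5 ⊕ (Fin 3 ⊕ Fin 1)) (Sum.inl 3 : Fin 5 ⊕ (Fin 3 ⊕ Fin 1))
    rw [hm1, hm3] at h
    rw [h, z41]
  have z26 : ω ((0:ℝ), Pi.single (Sum.inl 2 : Fin 5 ⊕ (Fin 3 ⊕ Fin 1)) (1:ℝ)) ((0:ℝ), Pi.single (Sum.inr (Sum.inl 1) : Fin 5 ⊕ (Fin 3 ⊕ Fin 1)) (1:ℝ)) = 0 := by
    have h := hR (Sum.inl 1 : Fin 5 ⊕ (Fin 3 ⊕ Fin 1)) (Sum.inr (Sum.inl 1) : Fin 5 ⊕ (Fin 3 ⊕ Fin 1))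
    rw [hm1, hm6] at h
    rw [h, z71]
  have z36 : ω ((0:ℝ), Pi.single (Sum.inl 3 : Fin 5 ⊕ (Fin 3 ⊕ Fin 1)) (1:ℝ)) ((0:ℝ), Pi.single (Sum.inr (Sum.inl 1) : Fin 5 ⊕ (Fin 3 ⊕ Fin 1)) (1:ℝ)) = 0 := by
    have h := hR (Sum.inl 2 : Fin 5 ⊕ (Fin 3 ⊕ Fin 1)) (Sum.inr (Sum.inl 1) : Fin 5 ⊕ (Fin 3 ⊕ Fin 1))
    rw [hm2, hm6] at h
    rw [h, z72]
  have z75 : ω ((0:ℝ), Pi.single (Sum.inr (Sum.inl 2) : Fin 5 ⊕ (Fin 3 ⊕ Fin 1)) (1:ℝ)) ((0:ℝ), Pi.single (Sum.inr (Sum.inl 0) : Fin 5 ⊕ (Fin 3 ⊕ Fin 1)) (1:ℝ)) = 0 := by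
    have h := hR (Sum.inr (Sum.inl 1) : Fin 5 ⊕ (Fin 3 ⊕ Fin 1)) (Sum.inr (Sum.inl 0) : Fin 5 ⊕ (Fin 3 ⊕ Fin 1))
    rw [hm6, hm5] at h
    rw [h, z66]
  have z40 : ω ((0:ℝ), Pi.single (Sum.inl 4 : Fin 5 ⊕ (Fin 3 ⊕ Fin 1)) (1:ℝ)) ((0:ℝ), Pi.single (Sum.inl 0 : Fin 5 ⊕ (Fin 3 ⊕ Fin 1)) (1:ℝ)) = 0 := by
    have h := hR (Sum.inl 3 : Fin 5 ⊕ (Fin 3 ⊕ Fin 1)) (Sum.inl 0 : Fin 5 ⊕ (Fin 3 ⊕ Fin 1))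
    rw [hm3, hm0] at h
    rw [h, hskew, z31, neg_zero]
  have z35 : ω ((0:ℝ), Pi.single (Sum.inl 3 : Fin 5 ⊕ (Fin 3 ⊕ Fin 1)) (1:ℝ)) ((0:ℝ), Pi.single (Sum.inr (Sum.inl 0) : Fin 5 ⊕ (Fin 3 ⊕ Fin 1)) (1:ℝ)) = 0 := by
    have h := hR (Sum.inl 2 : Fin 5 ⊕ (Fin 3 ⊕ Fin 1)) (Sum.inr (Sum.inl 0) : Fin 5 ⊕ (Fin 3 ⊕ Fin 1))
    rw [hm2, hm5] at h
    rw [h, hskew, z26, neg_zero]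
  have z45 : ω ((0:ℝ), Pi.single (Sum.inl 4 : Fin 5 ⊕ (Fin 3 ⊕ Fin 1)) (1:ℝ)) ((0:ℝ), Pi.single (Sum.inr (Sum.inl 0) : Fin 5 ⊕ (Fin 3 ⊕ Fin 1)) (1:ℝ)) = 0 := by
    have h := hR (Sum.inl 3 : Fin 5 ⊕ (Fin 3 ⊕ Fin 1)) (Sum.inr (Sum.inl 0) : Fin 5 ⊕ (Fin 3 ⊕ Fin 1))
    rw [hm3, hm5] at h
    rw [h, hskew, z36, neg_zero]
  have z32 : ω ((0:ℝ), Pi.single (Sum.inl 3 : Fin 5 ⊕ (Fin 3 ⊕ Fin 1)) (1:ℝ)) ((0:ℝ), Pi.single (Sum.inl 2 : Fin 5 ⊕ (Fin 3 ⊕ Fin 1)) (1:ℝ)) = 0 := by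
    rw [hskew, z23, neg_zero]
  obtain ⟨c3, c4, c7, hφ, hψ, hnz⟩ :
      ∃ c3 c4 c7 : ℝ,
        c3 * ω (((1:ℝ), (0 : Fin 5 ⊕ (Fin 3 ⊕ Fin 1) → ℝ)) : ℝ × (Fin 5 ⊕ (Fin 3 ⊕ Fin 1) → ℝ)) ((0:ℝ), Pi.single (Sum.inl 3 : Fin 5 ⊕ (Fin 3 ⊕ Fin 1)) (1:ℝ)) + c4 * ω (((1:ℝ), (0 : Fin 5 ⊕ (Fin 3 ⊕ Fin 1) → ℝ)) : ℝ × (Fin 5 ⊕ (Fin 3 ⊕ Fin 1) → ℝ)) ((0:ℝ), Pi.single (Sum.inl 4 : Fin 5 ⊕ (Fin 3 ⊕ Fin 1)) (1:ℝ)) + c7 * ω (((1:ℝ), (0 : Fin 5 ⊕ (Fin 3 ⊕ Fin 1) → ℝ)) : ℝ × (Fin 5 ⊕ (Fin 3 ⊕ Fin 1) → ℝ)) ((0:ℝ), Pi.single (Sum.inr (Sum.inl 2) : Fin 5 ⊕ (Fin 3 ⊕ Fin 1)) (1:ℝ)) = 0 ∧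
        c3 * ω ((0:ℝ), Pi.single (Sum.inl 3 : Fin 5 ⊕ (Fin 3 ⊕ Fin 1)) (1:ℝ)) ((0:ℝ), Pi.single (Sum.inl 0 : Fin 5 ⊕ (Fin 3 ⊕ Fin 1)) (1:ℝ)) + c7 * ω ((0:ℝ), Pi.single (Sum.inr (Sum.inl 2) : Fin 5 ⊕ (Fin 3 ⊕ Fin 1)) (1:ℝ)) ((0:ℝ), Pi.single (Sum.inl 0 : Fin 5 ⊕ (Fin 3 ⊕ Fin 1)) (1:ℝ)) = 0 ∧
        ¬(c3 = 0 ∧ c4 = 0 ∧ c7 = 0) := by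
    by_cases h4 : ω (((1:ℝ), (0 : Fin 5 ⊕ (Fin 3 ⊕ Fin 1) → ℝ)) : ℝ × (Fin 5 ⊕ (Fin 3 ⊕ Fin 1) → ℝ)) ((0:ℝ), Pi.single (Sum.inl 4 : Fin 5 ⊕ (Fin 3 ⊕ Fin 1)) (1:ℝ)) = 0
    · exact ⟨0, 1, 0, by rw [h4]; ring, by ring, by simp⟩
    · by_cases h37 : ω ((0:ℝ), Pi.single (Sum.inl 3 : Fin 5 ⊕ (Fin 3 ⊕ Fin 1)) (1:ℝ)) ((0:ℝ), Pi.single (Sum.inl 0 : Fin 5 ⊕ (Fin 3 ⊕ Fin 1)) (1:ℝ)) = 0 ∧ ω ((0:ℝ), Pi.single (Sum.inr (Sum.inl 2) : Fin 5 ⊕ (Fin 3 ⊕ Fin 1)) (1:ℝ)) ((0:ℝ), Pi.single (Sum.inl 0 : Fin 5 ⊕ (Fin 3 ⊕ Fin 1)) (1:ℝ)) = 0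
      · exact ⟨ω (((1:ℝ), (0 : Fin 5 ⊕ (Fin 3 ⊕ Fin 1) → ℝ)) : ℝ × (Fin 5 ⊕ (Fin 3 ⊕ Fin 1) → ℝ)) ((0:ℝ), Pi.single (Sum.inl 4 : Fin 5 ⊕ (Fin 3 ⊕ Fin 1)) (1:ℝ)), -ω (((1:ℝ), (0 : Fin 5 ⊕ (Fin 3 ⊕ Fin 1) → ℝ)) : ℝ × (Fin 5 ⊕ (Fin 3 ⊕ Fin 1) → ℝ)) ((0:ℝ), Pi.single (Sum.inl 3 : Fin 5 ⊕ (Fin 3 ⊕ Fin 1)) (1:ℝ)), 0, by ring, by rw [h37.1]; ring, fun h => h4 h.1⟩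
      · refine ⟨ω (((1:ℝ), (0 : Fin 5 ⊕ (Fin 3 ⊕ Fin 1) → ℝ)) : ℝ × (Fin 5 ⊕ (Fin 3 ⊕ Fin 1) → ℝ)) ((0:ℝ), Pi.single (Sum.inl 4 : Fin 5 ⊕ (Fin 3 ⊕ Fin 1)) (1:ℝ)) * ω ((0:ℝ), Pi.single (Sum.inr (Sum.inl 2) : Fin 5 ⊕ (Fin 3 ⊕ Fin 1)) (1:ℝ)) ((0:ℝ), Pi.single (Sum.inl 0 : Fin 5 ⊕ (Fin 3 ⊕ Fin 1)) (1:ℝ)), ω ((0:ℝ), Pi.single (Sum.inl 3 : Fin 5 ⊕ (Fin 3 ⊕ Fin 1)) (1:ℝ)) ((0:ℝ), Pi.single (Sum.inl 0 : Fin 5 ⊕ (Fin 3 ⊕ Fin 1)) (1:ℝ)) * ω (((1:ℝ), (0 : Fin 5 ⊕ (Fin 3 ⊕ Fin 1) → ℝ)) : ℝ × (Fin 5 ⊕ (Fin 3 ⊕ Fin 1) → ℝ)) ((0:ℝ), Pi.single (Sum.inr (Sum.inl 2) : Fin 5 ⊕ (Fin 3 ⊕ Fin 1)) (1:ℝ))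 - ω ((0:ℝ), Pi.single (Sum.inr (Sum.inl 2) : Fin 5 ⊕ (Fin 3 ⊕ Fin 1)) (1:ℝ)) ((0:ℝ), Pi.single (Sum.inl 0 : Fin 5 ⊕ (Fin 3 ⊕ Fin 1)) (1:ℝ)) * ω (((1:ℝ), (0 : Fin 5 ⊕ (Fin 3 ⊕ Fin 1) → ℝ)) : ℝ × (Fin 5 ⊕ (Fin 3 ⊕ Fin 1) → ℝ)) ((0:ℝ), Pi.single (Sum.inl 3 : Fin 5 ⊕ (Fin 3 ⊕ Fin 1)) (1:ℝ)),
          -(ω (((1:ℝ), (0 : Fin 5 ⊕ (Fin 3 ⊕ Fin 1) → ℝ)) : ℝ × (Fin 5 ⊕ (Fin 3 ⊕ Fin 1) → ℝ)) ((0:ℝ), Pi.single (Sum.inl 4 : Fin 5 ⊕ (Fin 3 ⊕ Fin 1)) (1:ℝ)) * ω ((0:ℝ), Pi.single (Sum.inl 3 : Fin 5 ⊕ (Fin 3 ⊕ Fin 1)) (1:ℝ)) ((0:ℝ), Pi.single (Sum.inl 0 : Fin 5 ⊕ (Fin 3 ⊕ Fin 1)) (1:ℝ))), by ring, by ring, 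?_⟩
        rintro ⟨e1, _, e3⟩
        apply h37
        constructor
        · rcases mul_eq_zero.mp (neg_eq_zero.mp e3) with h' | h'
          · exact absurd h' h4
          · exact h'
        · rcases mul_eq_zero.mp e1 with h' | h'
          · exact absurd h' h4
          · exact h'
  set v : (Fin 5 ⊕ (Fin 3 ⊕ Fin 1)) → ℝ :=
    fun k => c3 * (Pi.single (Sum.inl 3 : Fin 5 ⊕ (Fin 3 ⊕ Fin 1)) (1:ℝ) : Fin 5 ⊕ (Fin 3 ⊕ Fin 1) → ℝ) k + c4 * (Pi.single (Sum.inl 4 : Fin 5 ⊕ (Fin 3 ⊕ Fin 1)) (1:ℝ) : Fin 5 ⊕ (Fin 3 ⊕ Fin 1) → ℝ) k + c7 * (Pi.single (Sum.inr (Sum.inl 2) : Fin 5 ⊕ (Fin 3 ⊕ Fin 1)) (1:ℝ) : Fin 5 ⊕ (Fin 3 ⊕ Fin 1) → ℝ) k with hv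
  have hxdec : (((0:ℝ), v) : ℝ × (Fin 5 ⊕ (Fin 3 ⊕ Fin 1) → ℝ))
      = c3 • (((0:ℝ), Pi.single (Sum.inl 3 : Fin 5 ⊕ (Fin 3 ⊕ Fin 1)) (1:ℝ)) : ℝ × (Fin 5 ⊕ (Fin 3 ⊕ Fin 1) → ℝ)) + c4 • (((0:ℝ), Pi.single (Sum.inl 4 : Fin 5 ⊕ (Fin 3 ⊕ Fin 1)) (1:ℝ)) : ℝ × (Fin 5 ⊕ (Fin 3 ⊕ Fin 1) → ℝ)) + c7 • (((0:ℝ), Pi.single (Sum.inr (Sum.inl 2) : Fin 5 ⊕ (Fin 3 ⊕ Fin 1)) (1:ℝ)) : ℝ × (Fin 5 ⊕ (Fin 3 ⊕ Fin 1) → ℝ)) := by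
    refine Prod.ext (by simp) ?_
    funext k
    rw [hv]
    simp
  have hωx : ∀ z, ω ((0:ℝ), v) z
      = c3 * ω ((0:ℝ), Pi.single (Sum.inl 3 : Fin 5 ⊕ (Fin 3 ⊕ Fin 1)) (1:ℝ)) z + c4 * ω ((0:ℝ), Pi.single (Sum.inl 4 : Fin 5 ⊕ (Fin 3 ⊕ Fin 1)) (1:ℝ)) z + c7 * ω ((0:ℝ), Pi.single (Sum.inr (Sum.inl 2) : Fin 5 ⊕ (Fin 3 ⊕ Fin 1)) (1:ℝ)) z := by
    intro z
    rw [hxdec]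
    simp only [map_add, _root_.map_smul, LinearMap.add_apply, LinearMap.smul_apply, smul_eq_mul]
  have hz0 : ω ((0:ℝ), v) ((0:ℝ), Pi.single (Sum.inl 0 : Fin 5 ⊕ (Fin 3 ⊕ Fin 1)) (1:ℝ)) = 0 := by
    rw [hωx, z40]
    linarith [hψ]
  have hz1 : ω ((0:ℝ), v) ((0:ℝ), Pi.single (Sum.inl 1 : Fin 5 ⊕ (Fin 3 ⊕ Fin 1)) (1:ℝ)) = 0 := by
    rw [hωx, z31, z41, z71]
    ring
  have hz2 : ω ((0:ℝ), v) ((0:ℝ), Pi.single (Sum.inl 2 : Fin 5 ⊕ (Fin 3 ⊕ Fin 1)) (1:ℝ)) = 0 := by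
    rw [hωx, z32, z42, z72]
    ring
  have hz3 : ω ((0:ℝ), v) ((0:ℝ), Pi.single (Sum.inl 3 : Fin 5 ⊕ (Fin 3 ⊕ Fin 1)) (1:ℝ)) = 0 := by
    rw [hωx, z33, z43, z73]
    ring
  have hz4 : ω ((0:ℝ), v) ((0:ℝ), Pi.single (Sum.inl 4 : Fin 5 ⊕ (Fin 3 ⊕ Fin 1)) (1:ℝ)) = 0 := by
    rw [hωx, z34, z44, z74]
    ring
  have hz5 : ω ((0:ℝ), v) ((0:ℝ), Pi.single (Sum.inr (Sum.inl 0) : Fin 5 ⊕ (Fin 3 ⊕ Fin 1)) (1:ℝ)) = 0 := by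
    rw [hωx, z35, z45, z75]
    ring
  have hz6 : ω ((0:ℝ), v) ((0:ℝ), Pi.single (Sum.inr (Sum.inl 1) : Fin 5 ⊕ (Fin 3 ⊕ Fin 1)) (1:ℝ)) = 0 := by
    rw [hωx, z36, z46, z76]
    ring
  have hz7 : ω ((0:ℝ), v) ((0:ℝ), Pi.single (Sum.inr (Sum.inl 2) : Fin 5 ⊕ (Fin 3 ⊕ Fin 1)) (1:ℝ)) = 0 := by
    rw [hωx, z37, z47, z77]
    ring
  have hz8 : ω ((0:ℝ), v) ((0:ℝ), Pi.single (Sum.inr (Sum.inr 0) : Fin 5 ⊕ (Fin 3 ⊕ Fin 1)) (1:ℝ)) = 0 := by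
    rw [hωx, z38, z48, z78]
    ring
  have hfirst : ω ((0:ℝ), v) (((1:ℝ), (0 : Fin 5 ⊕ (Fin 3 ⊕ Fin 1) → ℝ)) : ℝ × (Fin 5 ⊕ (Fin 3 ⊕ Fin 1) → ℝ)) = 0 := by
    rw [hωx, hskew ((0:ℝ), Pi.single (Sum.inl 3 : Fin 5 ⊕ (Fin 3 ⊕ Fin 1)) (1:ℝ)) (((1:ℝ), (0 : Fin 5 ⊕ (Fin 3 ⊕ Fin 1) → ℝ)) : ℝ × (Fin 5 ⊕ (Fin 3 ⊕ Fin 1) → ℝ)), hskew ((0:ℝ), Pi.single (Sum.inl 4 : Fin 5 ⊕ (Fin 3 ⊕ Fin 1)) (1:ℝ)) (((1:ℝ), (0 : Fin 5 ⊕ (Fin 3 ⊕ Fin 1) → ℝ)) : ℝ × (Fin 5 ⊕ (Fin 3 ⊕ Fin 1) → ℝ)), hskew ((0:ℝ), Pi.single (Sum.inr (Sum.inl 2) : Fin 5 ⊕ (Fin 3 ⊕ Fin 1)) (1:ℝ)) (((1:ℝ), (0 : Fin 5 ⊕ (Fin 3 ⊕ Fin 1) → ℝ)) : ℝ × (Fin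 5 ⊕ (Fin 3 ⊕ Fin 1) → ℝ))]
    linarith [hφ]
  have hall : ∀ j : Fin 5 ⊕ (Fin 3 ⊕ Fin 1), ω ((0:ℝ), v) ((0:ℝ), Pi.single j (1:ℝ)) = 0 := by
    rintro (a | b | c)
    · fin_cases a
      exacts [hz0, hz1, hz2, hz3, hz4]
    · fin_cases b
      exacts [hz5, hz6, hz7]
    · fin_cases c
      exact hz8
  have hy : ∀ y, ω ((0:ℝ), v) y = 0 := by
    intro y
    have hsum : (∑ j : Fin 5 ⊕ (Fin 3 ⊕ Fin 1), y.2 j • (((0:ℝ), Pi.single j (1:ℝ)) : ℝ × (Fin 5 ⊕ (Fin 3 ⊕ Fin 1) → ℝ)))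
        = ((0:ℝ), y.2) := by
      refine Prod.ext ?_ ?_
      · simp [Prod.fst_sum]
      · simp only [Prod.snd_sum, Prod.smul_mk]
        funext k
        simp [Pi.single_apply]
    have hdec : y = y.1 • (((1:ℝ), (0 : Fin 5 ⊕ (Fin 3 ⊕ Fin 1) → ℝ)) : ℝ × (Fin 5 ⊕ (Fin 3 ⊕ Fin 1) → ℝ)) + ((0:ℝ), y.2) := by
      refine Prod.ext ?_ ?_ <;> simp
    rw [hdec, map_add, _root_.map_smul, ← hsum, map_sum]
    simp only [smul_eq_mul, hfirst, mul_zero, zero_add, _root_.map_smul]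
    refine Finset.sum_eq_zero fun j _ => ?_
    simp [hall j]
  have h0 := hnd _ hy
  have hveq : v = 0 := congrArg Prod.snd h0
  apply hnz
  refine ⟨?_, ?_, ?_⟩
  · have := congrFun hveq (Sum.inl 3 : Fin 5 ⊕ (Fin 3 ⊕ Fin 1))
    simpa [hv, Pi.single_apply] using this
  · have := congrFun hveq (Sum.inl 4 : Fin 5 ⊕ (Fin 3 ⊕ Fin 1))
    simpa [hv, Pi.single_apply] using this
  · have := congrFun hveq (Sum.inr (Sum.inl 2) : Fin 5 ⊕ (Fin 3 ⊕ Fin 1))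
    simpa [hv, Pi.single_apply] using this

/-- The 10-dimensional almost abelian Lie algebra `𝔤_M` with
`M = 𝒥₅ ⊕ 𝒥₃ ⊕ 0₁ ∈ M(9,ℝ)` does not admit any symplectic structure. -/
theorem stmt14 :
    ¬ HasSymplecticStructure
        (Matrix.fromBlocks (jordanBlock 5) 0 0
          (Matrix.fromBlocks (jordanBlock 3) 0 0
            (0 : Matrix (Fin 1) (Fin 1) ℝ))) := by
  intro h
  exact key14 h
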